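/- Let B ∈ R^{d×d} be invertible with every column of Euclidean norm at most 2. For m ≥ 0, let C_m = {x ∈ R^d : B^{-1}x ≥ m coordinatewise}. Let c, c' ∈ R^d be fixed and let Z ∈ R^d be a random vector with 1-log-Lipschitz density μ (i.e., μ(x)/μ(y) ≤ exp(||x - y||) for all x, y). Then for m = ln(1/0.99)/(2d), Pr[[c + Z, c' + Z] ∩ C_m ≠ ∅] ≥ 0.99 · Pr[[c + Z, c' + Z] ∩ C_0 ≠ ∅]. -/

import Mathlib

open MeasureTheory

open Set Pointwise in
private lemma hit_measurable {d : ℕ} {C : Set (EuclideanSpace ℝ (Fin d))} (hC : IsClosed C)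
    (c c' : EuclideanSpace ℝ (Fin d)) :
    MeasurableSet {z | (segment ℝ (c + z) (c' + z) ∩ C).Nonempty} := by
  have h : {z | (segment ℝ (c + z) (c' + z) ∩ C).Nonempty}
      = C + (-(segment ℝ c c')) := by
    ext z
    simp only [Set.mem_setOf_eq, Set.mem_add, Set.mem_neg]
    constructor
    · rintro ⟨x, hx, hxC⟩
      refine ⟨x, hxC, -(x - z), ?_, by abel⟩
      rw [neg_neg]
      have : z + (x - z) ∈ segment ℝ (z + c) (z + c') := by
        rw [show z + (x - z) = x by abel, add_comm z c, add_comm z c']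
        exact hx
      exact (mem_segment_translate ℝ z).1 this
    · rintro ⟨x, hxC, u, hu, hz⟩
      refine ⟨x, ?_, hxC⟩
      have h2 : z + (-u) ∈ segment ℝ (z + c) (z + c') := (mem_segment_translate ℝ z).2 hu
      rw [show z + -u = x from by rw [← hz]; abel, add_comm z c, add_comm z c'] at h2
      exact h2
  rw [h]
  have hcseg : IsCompact (segment ℝ c c') := by
    rw [segment_eq_image]
    exact isCompact_Icc.image (by continuity)
  exact (hC.add_right_of_isCompact hcseg.neg).measurableSet

private lemma cone_closed {d : ℕ} (M : Matrix (Fin d) (Fin d) ℝ) (m : ℝ) :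
    IsClosed {x : EuclideanSpace ℝ (Fin d) | ∀ i, m ≤ M.mulVec (fun j => x j) i} := by
  have : {x : EuclideanSpace ℝ (Fin d) | ∀ i, m ≤ M.mulVec (fun j => x j) i}
      = ⋂ i, {x : EuclideanSpace ℝ (Fin d) | m ≤ M.mulVec (fun j => x j) i} := by
    ext x; simp [Set.mem_iInter]
  rw [this]
  refine isClosed_iInter fun i => isClosed_le continuous_const ?_
  simp only [Matrix.mulVec, dotProduct]
  exact continuous_finset_sum _ fun j _ =>
    continuous_const.mul ((continuous_apply j).comp (PiLp.continuous_ofLp 2 fun _ : Fin d => ℝ))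

private lemma cont_of_loglip {d : ℕ} {f : EuclideanSpace ℝ (Fin d) → ℝ}
    (hfpos : ∀ x, 0 < f x) (hlip : ∀ x y, f x ≤ f y * Real.exp ‖x - y‖) :
    Continuous f := by
  have key : ∀ x y : EuclideanSpace ℝ (Fin d),
      Real.log (f x) - Real.log (f y) ≤ ‖x - y‖ := by
    intro x y
    have h1 : Real.log (f x) ≤ Real.log (f y * Real.exp ‖x - y‖) :=
      Real.log_le_log (hfpos x) (hlip x y)
    rw [Real.log_mul (hfpos y).ne' (Real.exp_ne_zero _), Real.log_exp] at h1
    linarith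
  have hlog : LipschitzWith 1 fun x => Real.log (f x) := by
    apply LipschitzWith.of_dist_le_mul
    intro x y
    rw [Real.dist_eq, NNReal.coe_one, one_mul, abs_sub_le_iff, dist_eq_norm]
    refine ⟨key x y, ?_⟩
    have := key y x
    rwa [norm_sub_rev] at this
  have : f = fun x => Real.exp (Real.log (f x)) :=
    funext fun x => (Real.exp_log (hfpos x)).symm
  rw [this]
  exact Real.continuous_exp.comp hlog.continuous

private lemma seg_translate {E : Type*} [AddCommGroup E] [Module ℝ E] {a b x : E} (v : E)
    (h : x ∈ segment ℝ a b) : x + v ∈ segment ℝ (a + v) (b + v) := by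
  rcases h with ⟨s, u, hs, hu, hsu, rfl⟩
  refine ⟨s, u, hs, hu, hsu, ?_⟩
  have : s • (a + v) + u • (b + v) = (s • a + u • b) + (s + u) • v := by
    simp only [smul_add, add_smul]; abel
  rw [this, hsu, one_smul]

/-- Segment hits the middle of the cone: for an invertible matrix `B` with columns of
norm at most 2, `C_m = {x : B⁻¹x ≥ m}`, fixed `c, c'` and a random vector `Z` with
`1`-log-Lipschitz density, with `m = ln(1/0.99)/(2d)`,
`Pr[[c+Z, c'+Z] ∩ C_m ≠ ∅] ≥ 0.99·Pr[[c+Z, c'+Z] ∩ C_0 ≠ ∅]`. -/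
theorem stmt_14 (d : ℕ) (hd : 0 < d) (B : Matrix (Fin d) (Fin d) ℝ) (hB : IsUnit B)
    (hcol : ∀ j, Real.sqrt (∑ i, B i j ^ 2) ≤ 2)
    (c c' : EuclideanSpace ℝ (Fin d))
    (f : EuclideanSpace ℝ (Fin d) → ℝ) (hfpos : ∀ x, 0 < f x)
    (hlip : ∀ x y, f x ≤ f y * Real.exp ‖x - y‖)
    (hprob : ∫ x, f x = 1) :
    ENNReal.ofReal 0.99 *
        (volume.withDensity fun x => ENNReal.ofReal (f x))
          {z : EuclideanSpace ℝ (Fin d) |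
            (segment ℝ (c + z) (c' + z) ∩
              {x : EuclideanSpace ℝ (Fin d) |
                ∀ i, (0 : ℝ) ≤ B⁻¹.mulVec (fun j => x j) i}).Nonempty} ≤
      (volume.withDensity fun x => ENNReal.ofReal (f x))
        {z : EuclideanSpace ℝ (Fin d) |
          (segment ℝ (c + z) (c' + z) ∩
            {x : EuclideanSpace ℝ (Fin d) |
              ∀ i, Real.log (1 / 0.99) / (2 * d) ≤ B⁻¹.mulVec (fun j => x j) i}).Nonempty} := by
  classical
  set m : ℝ := Real.log (1 / 0.99) / (2 * d) with hm
  have hlogpos : 0 ≤ Real.log (1 / 0.99) := Real.log_nonneg (by norm_num)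
  have hdpos : (0:ℝ) < 2 * d := by positivity
  have hmpos : 0 ≤ m := div_nonneg hlogpos hdpos.le
  -- the shift vector
  set t : EuclideanSpace ℝ (Fin d) :=
    (EuclideanSpace.equiv (Fin d) ℝ).symm (B.mulVec fun _ => m) with ht
  have ht_apply : ∀ j, t j = B.mulVec (fun _ => m) j := fun j => rfl
  have hBt : B⁻¹.mulVec (fun j => t j) = fun _ => m := by
    have : (fun j => t j) = B.mulVec fun _ => m := rfl
    rw [this, Matrix.mulVec_mulVec,
      Matrix.nonsing_inv_mul B ((Matrix.isUnit_iff_isUnit_det B).1 hB), Matrix.one_mulVec]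
  -- norm bound on t
  have htnorm : ‖t‖ ≤ Real.log (1 / 0.99) := by
    have hteq : t = ∑ j, m • ((EuclideanSpace.equiv (Fin d) ℝ).symm fun i => B i j) := by
      apply PiLp.ext
      intro i
      rw [WithLp.ofLp_sum, Finset.sum_apply]
      simp only [PiLp.smul_apply, smul_eq_mul]
      show B.mulVec (fun _ => m) i = ∑ j, m * B i j
      simp [Matrix.mulVec, dotProduct, mul_comm]
    calc ‖t‖ ≤ ∑ j, ‖m • ((EuclideanSpace.equiv (Fin d) ℝ).symm fun i => B i j)‖ := by
          rw [hteq]; exact norm_sum_le _ _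
      _ ≤ ∑ _j : Fin d, m * 2 := by
          apply Finset.sum_le_sum
          intro j _
          rw [norm_smul, Real.norm_eq_abs, abs_of_nonneg hmpos]
          apply mul_le_mul_of_nonneg_left _ hmpos
          have : ‖((EuclideanSpace.equiv (Fin d) ℝ).symm fun i => B i j)‖
              = Real.sqrt (∑ i, B i j ^ 2) := by
            rw [EuclideanSpace.norm_eq]
            simp [sq_abs]
          rw [this]
          exact hcol j
      _ = Real.log (1 / 0.99) := by
          rw [Finset.sum_const, Finset.card_fin, nsmul_eq_mul, hm]
          field_simp
  -- the two hitting sets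
  set C0 : Set (EuclideanSpace ℝ (Fin d)) :=
    {x | ∀ i, (0:ℝ) ≤ B⁻¹.mulVec (fun j => x j) i} with hC0
  set A0 : Set (EuclideanSpace ℝ (Fin d)) :=
    {z | (segment ℝ (c + z) (c' + z) ∩ C0).Nonempty} with hA0
  have hA0meas : MeasurableSet A0 := hit_measurable (cone_closed B⁻¹ 0) c c'
  -- inclusion: (· - t) ⁻¹' A0 ⊆ A_m
  have hincl : (fun z => z - t) ⁻¹' A0 ⊆
      {z : EuclideanSpace ℝ (Fin d) |
        (segment ℝ (c + z) (c' + z) ∩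
          {x : EuclideanSpace ℝ (Fin d) | ∀ i, m ≤ B⁻¹.mulVec (fun j => x j) i}).Nonempty} := by
    rintro z ⟨x, hxseg, hxC⟩
    refine ⟨x + t, ?_, ?_⟩
    · have := seg_translate t hxseg
      rw [show c + (z - t) + t = c + z by abel, show c' + (z - t) + t = c' + z by abel] at this
      exact this
    · intro i
      have hsub : (fun j => (x + t) j) = (fun j => x j) + fun j => t j := rfl
      rw [hsub, Matrix.mulVec_add, hBt]
      have := hxC i
      simp only [Pi.add_apply]
      linarith
  -- measure computation
  set ν := volume.withDensity fun x => ENNReal.ofReal (f x) with hν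
  have hfc : Continuous f := cont_of_loglip hfpos hlip
  have hFmeas : Measurable fun x : EuclideanSpace ℝ (Fin d) => ENNReal.ofReal (f x) :=
    ENNReal.measurable_ofReal.comp hfc.measurable
  have hSmeas : MeasurableSet ((fun z => z - t) ⁻¹' A0) :=
    hA0meas.preimage (measurable_sub_const t)
  have hchange : ν ((fun z => z - t) ⁻¹' A0)
      = ∫⁻ x in A0, ENNReal.ofReal (f (x + t)) ∂volume := by
    rw [hν, withDensity_apply _ hSmeas]
    conv_lhs => rw [← map_add_right_eq_self volume t]
    rw [setLIntegral_map hSmeas hFmeas (measurable_add_const t)]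
    have hpre : (fun x => x + t) ⁻¹' ((fun z => z - t) ⁻¹' A0) = A0 := by
      ext x; simp
    rw [hpre]
  have hpt : ∀ x : EuclideanSpace ℝ (Fin d), Real.exp (-‖t‖) * f x ≤ f (x + t) := by
    intro x
    have h1 := hlip x (x + t)
    have h2 : ‖x - (x + t)‖ = ‖t‖ := by
      rw [show x - (x + t) = -t by abel, norm_neg]
    rw [h2] at h1
    have he := Real.exp_pos ‖t‖
    have hne := Real.exp_pos (-‖t‖)
    calc Real.exp (-‖t‖) * f x ≤ Real.exp (-‖t‖) * (f (x + t) * Real.exp ‖t‖) := by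
          exact mul_le_mul_of_nonneg_left h1 hne.le
      _ = f (x + t) * (Real.exp (-‖t‖) * Real.exp ‖t‖) := by ring
      _ = f (x + t) := by rw [← Real.exp_add, neg_add_cancel, Real.exp_zero, mul_one]
  have hbound : ENNReal.ofReal (Real.exp (-‖t‖)) * ν A0 ≤ ν ((fun z => z - t) ⁻¹' A0) := by
    rw [hchange, hν, withDensity_apply _ hA0meas, ← lintegral_const_mul _ hFmeas]
    apply lintegral_mono
    intro x
    dsimp only
    rw [← ENNReal.ofReal_mul (Real.exp_pos _).le]
    exact ENNReal.ofReal_le_ofReal (hpt x)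
  have hexp : ENNReal.ofReal 0.99 ≤ ENNReal.ofReal (Real.exp (-‖t‖)) := by
    apply ENNReal.ofReal_le_ofReal
    have : Real.log 0.99 ≤ -‖t‖ := by
      have : -Real.log (1 / 0.99) = Real.log 0.99 := by
        rw [one_div, Real.log_inv, neg_neg]
      linarith [htnorm]
    calc (0.99:ℝ) = Real.exp (Real.log 0.99) := (Real.exp_log (by norm_num)).symm
      _ ≤ Real.exp (-‖t‖) := Real.exp_le_exp.2 this
  calc ENNReal.ofReal 0.99 * ν A0 ≤ ENNReal.ofReal (Real.exp (-‖t‖)) * ν A0 :=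
        mul_le_mul_left hexp _
    _ ≤ ν ((fun z => z - t) ⁻¹' A0) := hbound
    _ ≤ _ := measure_mono hincl
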